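/- Fix β̃ > 0, α > 1, and γ with β̃ < γ < β̃(1 + (α − 1)²/(4α)), and let f(x) = (β̃ − γ)x + β̃(α − 1)x² − αβ̃x³. Then f has exactly two fixed points in the open interval (0, 1), namely x± = ((α − 1) ± √((α − 1)² − 4α(γ/β̃ − 1)))/(2α), and moreover f′(0) = β̃ − γ < 0, f′(x₊) < 0, and f′(x₋) > 0; i.e., the system is bistable, with the no-opinion state and the upper branch both stable and the middle branch unstable. -/

import Mathlib

/-- Bistability for α > 1 in the window β̃ < γ < β̃(1 + (α-1)²/(4α)): the mean-field
vector field f(x) = (β̃-γ)x + β̃(α-1)x² - αβ̃x³ has exactly two fixed points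
x± = ((α-1) ± √((α-1)² - 4α(γ/β̃-1)))/(2α) in (0,1); moreover f'(0) = β̃-γ < 0,
f'(x₊) < 0 and f'(x₋) > 0: the no-opinion state and upper branch are stable, the
middle branch unstable. -/
theorem bistability_subcritical
    (b α γ : ℝ) (hb : 0 < b) (hα : 1 < α)
    (hγ1 : b < γ) (hγ2 : γ < b * (1 + (α - 1) ^ 2 / (4 * α))) :
    {x : ℝ | x ∈ Set.Ioo (0 : ℝ) 1 ∧
        (b - γ) * x + b * (α - 1) * x ^ 2 - α * b * x ^ 3 = 0}
      = ({((α - 1) + Real.sqrt ((α - 1) ^ 2 - 4 * α * (γ / b - 1))) / (2 * α),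
          ((α - 1) - Real.sqrt ((α - 1) ^ 2 - 4 * α * (γ / b - 1))) / (2 * α)} : Set ℝ) ∧
    ((α - 1) + Real.sqrt ((α - 1) ^ 2 - 4 * α * (γ / b - 1))) / (2 * α)
      ≠ ((α - 1) - Real.sqrt ((α - 1) ^ 2 - 4 * α * (γ / b - 1))) / (2 * α) ∧
    deriv (fun x : ℝ => (b - γ) * x + b * (α - 1) * x ^ 2 - α * b * x ^ 3) 0 = b - γ ∧
    b - γ < 0 ∧
    deriv (fun x : ℝ => (b - γ) * x + b * (α - 1) * x ^ 2 - α * b * x ^ 3)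
      (((α - 1) + Real.sqrt ((α - 1) ^ 2 - 4 * α * (γ / b - 1))) / (2 * α)) < 0 ∧
    0 < deriv (fun x : ℝ => (b - γ) * x + b * (α - 1) * x ^ 2 - α * b * x ^ 3)
      (((α - 1) - Real.sqrt ((α - 1) ^ 2 - 4 * α * (γ / b - 1))) / (2 * α)) := by
  have hα0 : (0:ℝ) < α := by linarith
  have hb0 : b ≠ 0 := ne_of_gt hb
  have hα0' : α ≠ 0 := ne_of_gt hα0
  set D : ℝ := (α - 1) ^ 2 - 4 * α * (γ / b - 1) with hD
  have hDpos : 0 < D := by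
    have h1 : γ / b < 1 + (α - 1) ^ 2 / (4 * α) := by
      rw [div_lt_iff₀ hb]
      linarith [hγ2]
    have h2 : 4 * α * (γ / b - 1) < (α - 1) ^ 2 := by
      have := sub_lt_sub_right h1 1
      have h4α : (0:ℝ) < 4 * α := by linarith
      calc 4 * α * (γ / b - 1) < 4 * α * ((α - 1) ^ 2 / (4 * α)) := by
            exact mul_lt_mul_of_pos_left (by linarith) h4α
        _ = (α - 1) ^ 2 := by field_simp
    simp [hD]; linarith
  set s : ℝ := Real.sqrt D with hsdef
  have hs : 0 < s := Real.sqrt_pos.mpr hDpos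
  have hs2 : s ^ 2 = D := Real.sq_sqrt hDpos.le
  have hs2' : b * s ^ 2 = b * (α - 1) ^ 2 - 4 * α * (γ - b) := by
    rw [hs2, hD]; field_simp
  set p : ℝ := ((α - 1) + s) / (2 * α) with hp
  set m : ℝ := ((α - 1) - s) / (2 * α) with hm
  -- s < α - 1
  have hDlt : D < (α - 1) ^ 2 := by
    have h1 : 1 < γ / b := (one_lt_div hb).mpr hγ1
    rw [hD]; nlinarith
  have hsA : s < α - 1 := by
    calc s = Real.sqrt D := hsdef
      _ < Real.sqrt ((α - 1) ^ 2) := Real.sqrt_lt_sqrt hDpos.le hDlt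
      _ = α - 1 := Real.sqrt_sq (by linarith)
  have hsA1 : s < α + 1 := by linarith
  have hmpos : 0 < m := by
    rw [hm]; exact div_pos (by linarith) (by linarith)
  have hp1 : p < 1 := by
    rw [hp, div_lt_one (by linarith : (0:ℝ) < 2 * α)]; linarith
  have hmp : m < p := by
    rw [hm, hp, div_lt_div_iff₀ (by linarith : (0:ℝ) < 2*α) (by linarith : (0:ℝ) < 2*α)]
    nlinarith
  have hppos : 0 < p := lt_trans hmpos hmp
  have hm1 : m < 1 := lt_trans hmp hp1
  -- quadratic vanishes at p and m
  have h2αp : 2 * α * p = (α - 1) + s := by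
    rw [hp]; field_simp
  have h2αm : 2 * α * m = (α - 1) - s := by
    rw [hm]; field_simp
  have hqp : (b - γ) + b * (α - 1) * p - α * b * p ^ 2 = 0 := by
    have h40 : (4 * α) * ((b - γ) + b * (α - 1) * p - α * b * p ^ 2) = 0 := by
      linear_combination (2 * b * (α - 1) - b * (2 * α * p + (α - 1) + s)) * h2αp - hs2'
    rcases mul_eq_zero.mp h40 with h | h
    · exact absurd h (by positivity)
    · exact h
  have hqm : (b - γ) + b * (α - 1) * m - α * b * m ^ 2 = 0 := by
    have h40 : (4 * α) * ((b - γ) + b * (α - 1) * m - α * b * m ^ 2) = 0 := by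
      linear_combination (2 * b * (α - 1) - b * (2 * α * m + (α - 1) - s)) * h2αm - hs2'
    rcases mul_eq_zero.mp h40 with h | h
    · exact absurd h (by positivity)
    · exact h
  -- derivative formula
  have H : ∀ y : ℝ, HasDerivAt (fun x : ℝ => (b - γ) * x + b * (α - 1) * x ^ 2 - α * b * x ^ 3)
      ((b - γ) + b * (α - 1) * (2 * y) - α * b * (3 * y ^ 2)) y := by
    intro y
    have h1 : HasDerivAt (fun x : ℝ => (b - γ) * x) (b - γ) y := by
      simpa using (hasDerivAt_id y).const_mul (b - γ)
    have h2 : HasDerivAt (fun x : ℝ => b * (α - 1) * x ^ 2) (b * (α - 1) * (2 * y)) y := by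
      simpa [mul_comm, mul_assoc, mul_left_comm] using (hasDerivAt_pow 2 y).const_mul (b * (α - 1))
    have h3 : HasDerivAt (fun x : ℝ => α * b * x ^ 3) (α * b * (3 * y ^ 2)) y := by
      simpa [mul_comm, mul_assoc, mul_left_comm] using (hasDerivAt_pow 3 y).const_mul (α * b)
    exact (h1.add h2).sub h3
  refine ⟨?_, ?_, ?_, by linarith, ?_, ?_⟩
  · -- set equality
    ext x
    simp only [Set.mem_setOf_eq, Set.mem_Ioo, Set.mem_insert_iff, Set.mem_singleton_iff]
    constructor
    · rintro ⟨⟨hx0, hx1⟩, hfx⟩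
      have hxne : x ≠ 0 := ne_of_gt hx0
      have hq : (b - γ) + b * (α - 1) * x - α * b * x ^ 2 = 0 := by
        have : x * ((b - γ) + b * (α - 1) * x - α * b * x ^ 2) = 0 := by
          linear_combination hfx
        rcases mul_eq_zero.mp this with h | h
        · exact absurd h hxne
        · exact h
      have key : (x - p) * (x - m) = 0 := by
        have h4 : (α * b) * ((x - p) * (x - m)) = 0 := by
          rw [hp, hm]; field_simp
          linear_combination (-4*α) * hq - hs2'
        rcases mul_eq_zero.mp h4 with h | h
        · exact absurd h (by positivity)
        · exact h
      rcases mul_eq_zero.mp key with h | h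
      · left; linarith [sub_eq_zero.mp h]
      · right; linarith [sub_eq_zero.mp h]
    · rintro (rfl | rfl)
      · exact ⟨⟨hppos, hp1⟩, by linear_combination p * hqp⟩
      · exact ⟨⟨hmpos, hm1⟩, by linear_combination m * hqm⟩
  · -- p ≠ m
    intro h
    rw [hp, hm, div_eq_div_iff (by linarith : (2:ℝ)*α ≠ 0) (by linarith : (2:ℝ)*α ≠ 0)] at h
    nlinarith
  · rw [(H 0).deriv]; ring
  · rw [(H p).deriv]
    have h2αp : 2 * α * p = (α - 1) + s := by
      rw [hp]; field_simp
    have key : (b - γ) + b * (α - 1) * (2 * p) - α * b * (3 * p ^ 2) = -(b * s * p) := by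
      linear_combination hqp - b * p * h2αp
    rw [key]
    have : 0 < b * s * p := by positivity
    linarith
  · rw [(H m).deriv]
    have h2αm : 2 * α * m = (α - 1) - s := by
      rw [hm]; field_simp
    have key : (b - γ) + b * (α - 1) * (2 * m) - α * b * (3 * m ^ 2) = b * s * m := by
      linear_combination hqm - b * m * h2αm
    rw [key]
    positivity
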